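/- arXiv:1505.05067 — 2 statements merged into one kernel-verified Lean document; each statement's English description precedes it below -/
import Mathlib

section
/- Let g(t) be an invertible formal power series (nonzero constant term) and f(t) a delta series (order exactly 1). Then there exists a unique sequence of polynomials S_{n,q}(x) with deg S_{n,q} = n satisfying ⟨g(t) f(t)^k | S_{n,q}(x)⟩ = [n]_q! δ_{n,k} for all n, k ≥ 0. -/
open Finset

/-- The q-number `[n]_q = (1 - q^n)/(1 - q)`. -/
noncomputable def qNum (q : ℂ) (n : ℕ) : ℂ := (1 - q ^ n) / (1 - q)

/-- The q-factorial `[n]_q! = [1]_q [2]_q ⋯ [n]_q`, with `[0]_q! = 1`. -/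
noncomputable def qFact (q : ℂ) : ℕ → ℂ
  | 0 => 1
  | n + 1 => qFact q n * qNum q (n + 1)

/-- The Gaussian (q-binomial) coefficient `[n choose k]_q = [n]_q!/([k]_q! [n-k]_q!)`. -/
noncomputable def qBinom (q : ℂ) (n k : ℕ) : ℂ := qFact q n / (qFact q k * qFact q (n - k))
/-- The q-umbral pairing: for `f(t) = ∑ (a_k/[k]_q!) t^k` and a polynomial `p`,
`⟨f(t) | p(x)⟩ = ∑_n p_n a_n`, where `a_n = (coeff n f) · [n]_q!`. -/
noncomputable def qPair (q : ℂ) (f : PowerSeries ℂ) (p : Polynomial ℂ) : ℂ :=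
  p.sum fun n c => c * (PowerSeries.coeff (R := ℂ) n f * qFact q n)

/-- matrix entry a_{k,m} -/
noncomputable def qA (q : ℂ) (g f : PowerSeries ℂ) (k m : ℕ) : ℂ :=
  PowerSeries.coeff (R := ℂ) m (g * f ^ k) * qFact q m

lemma qA_lt (q : ℂ) {f : PowerSeries ℂ} (hf0 : PowerSeries.coeff (R := ℂ) 0 f = 0)
    (g : PowerSeries ℂ) {k m : ℕ} (hm : m < k) : qA q g f k m = 0 := by
  have hX : PowerSeries.X ∣ f := PowerSeries.X_dvd_iff.mpr (by simpa using hf0)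
  have hdvd : PowerSeries.X ^ k ∣ g * f ^ k :=
    Dvd.dvd.mul_left (pow_dvd_pow_of_dvd hX k) g
  have := (PowerSeries.X_pow_dvd_iff.mp hdvd) m hm
  simp [qA, this]

lemma coeff_diag (q : ℂ) {f : PowerSeries ℂ} (hf0 : PowerSeries.coeff (R := ℂ) 0 f = 0)
    (g : PowerSeries ℂ) : ∀ k, PowerSeries.coeff (R := ℂ) k (g * f ^ k)
      = PowerSeries.coeff (R := ℂ) 0 g * (PowerSeries.coeff (R := ℂ) 1 f) ^ k := by
  intro k
  induction k with
  | zero => simp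
  | succ k ih =>
    rw [pow_succ, ← mul_assoc, PowerSeries.coeff_mul]
    rw [Finset.sum_eq_single (k, 1)]
    · rw [ih, pow_succ]; ring
    · rintro ⟨i, j⟩ hmem hne
      rw [Finset.HasAntidiagonal.mem_antidiagonal] at hmem
      rcases lt_trichotomy i k with h | h | h
      · have := qA_lt q hf0 g h
        have h0 : PowerSeries.coeff (R := ℂ) i (g * f ^ k) = 0 := by
          have hX : PowerSeries.X ∣ f := PowerSeries.X_dvd_iff.mpr (by simpa using hf0)
          have hdvd : PowerSeries.X ^ k ∣ g * f ^ k :=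
            Dvd.dvd.mul_left (pow_dvd_pow_of_dvd hX k) g
          exact (PowerSeries.X_pow_dvd_iff.mp hdvd) i h
        rw [h0, zero_mul]
      · exfalso; apply hne; subst h
        have : j = 1 := by omega
        rw [this]
      · have hj : j = 0 := by omega
        rw [hj, hf0, mul_zero]
    · intro h
      exact absurd (Finset.HasAntidiagonal.mem_antidiagonal.mpr (by omega)) h

lemma qA_diag_ne (q : ℂ) (hq : ∀ n, qFact q n ≠ 0) {g f : PowerSeries ℂ}
    (hg : PowerSeries.coeff (R := ℂ) 0 g ≠ 0) (hf0 : PowerSeries.coeff (R := ℂ) 0 f = 0)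
    (hf1 : PowerSeries.coeff (R := ℂ) 1 f ≠ 0) (k : ℕ) : qA q g f k k ≠ 0 := by
  rw [qA, coeff_diag q hf0 g k]
  exact mul_ne_zero (mul_ne_zero hg (pow_ne_zero _ hf1)) (hq k)

/-- coefficients of the Sheffer polynomial, downward recursion: qC n j is coeff of X^(n-j). -/
noncomputable def qC (q : ℂ) (g f : PowerSeries ℂ) (n : ℕ) : ℕ → ℂ
  | 0 => qFact q n / qA q g f n n
  | (j + 1) => -(∑ i ∈ (Finset.range (j + 1)).attach,
        qC q g f n i.1 * qA q g f (n - (j + 1)) (n - i.1))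
      / qA q g f (n - (j + 1)) (n - (j + 1))
  decreasing_by exact Finset.mem_range.mp i.2

noncomputable def qS (q : ℂ) (g f : PowerSeries ℂ) (n : ℕ) : Polynomial ℂ :=
  ∑ j ∈ Finset.range (n + 1), Polynomial.C (qC q g f n j) * Polynomial.X ^ (n - j)

lemma qS_coeff (q : ℂ) (g f : PowerSeries ℂ) (n m : ℕ) :
    (qS q g f n).coeff m = if m ≤ n then qC q g f n (n - m) else 0 := by
  rw [qS, Polynomial.finset_sum_coeff]
  by_cases hm : m ≤ n
  · rw [Finset.sum_eq_single (n - m)]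
    · simp [Polynomial.coeff_C_mul, Polynomial.coeff_X_pow, Nat.sub_sub_self hm, hm]
    · intro j hj hne
      rw [Finset.mem_range] at hj
      simp only [Polynomial.coeff_C_mul, Polynomial.coeff_X_pow]
      rw [if_neg (by omega), mul_zero]
    · intro h
      exact absurd (Finset.mem_range.mpr (by omega)) h
  · rw [if_neg hm]
    apply Finset.sum_eq_zero
    intro j hj
    rw [Finset.mem_range] at hj
    simp only [Polynomial.coeff_C_mul, Polynomial.coeff_X_pow]
    rw [if_neg (by omega), mul_zero]

lemma qS_natDegree_le (q : ℂ) (g f : PowerSeries ℂ) (n : ℕ) :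
    (qS q g f n).natDegree ≤ n := by
  apply Polynomial.natDegree_le_iff_coeff_eq_zero.mpr
  intro m hm
  rw [qS_coeff]
  simp [Nat.not_le.mpr hm]

lemma qPair_eq_sum (q : ℂ) (F : PowerSeries ℂ) (p : Polynomial ℂ) {N : ℕ}
    (hN : p.natDegree < N) :
    qPair q F p = ∑ m ∈ Finset.range N, p.coeff m * (PowerSeries.coeff (R := ℂ) m F * qFact q m) := by
  exact Polynomial.sum_over_range' p (fun n => by ring) N hN

lemma qS_pair (q : ℂ) (hq : ∀ n, qFact q n ≠ 0) {g f : PowerSeries ℂ}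
    (hg : PowerSeries.coeff (R := ℂ) 0 g ≠ 0) (hf0 : PowerSeries.coeff (R := ℂ) 0 f = 0)
    (hf1 : PowerSeries.coeff (R := ℂ) 1 f ≠ 0) (n k : ℕ) :
    qPair q (g * f ^ k) (qS q g f n) = if n = k then qFact q n else 0 := by
  have hd := qA_diag_ne q hq hg hf0 hf1
  have hsum : qPair q (g * f ^ k) (qS q g f n)
      = ∑ j ∈ Finset.range (n + 1), qC q g f n j * qA q g f k (n - j) := by
    rw [qPair_eq_sum q _ _ (Nat.lt_succ_of_le (qS_natDegree_le q g f n))]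
    rw [← Finset.sum_range_reflect]
    apply Finset.sum_congr rfl
    intro j hj
    rw [Finset.mem_range] at hj
    have h1 : n + 1 - 1 - j = n - j := by omega
    rw [h1, qS_coeff, if_pos (Nat.sub_le n j), Nat.sub_sub_self (by omega : j ≤ n)]
    rfl
  rw [hsum]
  rcases lt_trichotomy n k with h | h | h
  · rw [if_neg (by omega)]
    apply Finset.sum_eq_zero
    intro j hj
    rw [qA_lt q hf0 g (by omega : n - j < k), mul_zero]
  · subst h
    rw [if_pos rfl, Finset.sum_eq_single 0]
    · show qC q g f n 0 * qA q g f n (n - 0) = qFact q n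
      rw [Nat.sub_zero]
      simp only [qC]
      rw [div_mul_cancel₀ _ (hd n)]
    · intro j hj hne
      rw [Finset.mem_range] at hj
      rw [qA_lt q hf0 g (by omega : n - j < n), mul_zero]
    · intro h; exact absurd (Finset.mem_range.mpr (by omega)) h
  · -- k < n
    rw [if_neg (by omega)]
    obtain ⟨d, hdk⟩ : ∃ d, n - k = d + 1 := ⟨n - k - 1, by omega⟩
    have hk : k = n - (d + 1) := by omega
    have hsplit : Finset.range (n + 1)
        = Finset.range (d + 2) ∪ Finset.Ico (d + 2) (n + 1) := by
      rw [Finset.range_eq_Ico, Finset.range_eq_Ico, Finset.Ico_union_Ico_eq_Ico (by omega) (by omega)]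
    rw [hsplit, Finset.sum_union (by
      rw [Finset.range_eq_Ico]
      exact Finset.Ico_disjoint_Ico_consecutive 0 (d + 2) (n + 1))]
    have h2 : ∑ j ∈ Finset.Ico (d + 2) (n + 1), qC q g f n j * qA q g f k (n - j) = 0 := by
      apply Finset.sum_eq_zero
      intro j hj
      rw [Finset.mem_Ico] at hj
      rw [qA_lt q hf0 g (by omega : n - j < k), mul_zero]
    rw [h2, add_zero, Finset.sum_range_succ]
    have h3 : n - (d + 1) = k := hk.symm
    have h4 : qC q g f n (d + 1) * qA q g f k (n - (d + 1))
        = -(∑ i ∈ Finset.range (d + 1), qC q g f n i * qA q g f k (n - i)) := by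
      simp only [qC]
      rw [h3, div_mul_cancel₀ _ (hd k)]
      congr 1
      exact Finset.sum_attach (Finset.range (d + 1))
        (fun i => qC q g f n i * qA q g f k (n - i))
    rw [h4]
    ring

/-- Existence and uniqueness of the q-Sheffer sequence for an invertible series g
and a delta series f. -/
theorem qSheffer_existsUnique (q : ℂ) (hq : ∀ n, qFact q n ≠ 0)
    (g f : PowerSeries ℂ) (hg : PowerSeries.coeff (R := ℂ) 0 g ≠ 0)
    (hf0 : PowerSeries.coeff (R := ℂ) 0 f = 0) (hf1 : PowerSeries.coeff (R := ℂ) 1 f ≠ 0) :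
    ∃! S : ℕ → Polynomial ℂ, (∀ n, (S n).degree = n) ∧
      ∀ n k, qPair q (g * f ^ k) (S n) = if n = k then qFact q n else 0 := by
  have hd := qA_diag_ne q hq hg hf0 hf1
  refine ⟨qS q g f, ⟨?_, qS_pair q hq hg hf0 hf1⟩, ?_⟩
  · intro n
    apply Polynomial.degree_eq_of_le_of_coeff_ne_zero
    · exact (Polynomial.degree_le_iff_coeff_zero _ _).mpr (fun m hm => by
        rw [qS_coeff]
        have : ¬ m ≤ n := by exact_mod_cast fun h => absurd (by exact_mod_cast h : (m:WithBot ℕ) ≤ n) (not_le.mpr hm)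
        simp [this])
    · rw [qS_coeff, if_pos le_rfl, Nat.sub_self]
      simp only [qC]
      exact div_ne_zero (hq n) (hd n)
  · intro T ⟨hTdeg, hTpair⟩
    funext n
    by_contra hne
    set p : Polynomial ℂ := T n - qS q g f n with hp
    have hpne : p ≠ 0 := sub_ne_zero.mpr hne
    set m := p.natDegree with hm
    have hpair0 : ∀ k, qPair q (g * f ^ k) p = 0 := by
      intro k
      have hN : (T n).natDegree < max (T n).natDegree (qS q g f n).natDegree + 1 := by omega
      have hN2 : (qS q g f n).natDegree < max (T n).natDegree (qS q g f n).natDegree + 1 := by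
        omega
      have hN3 : p.natDegree < max (T n).natDegree (qS q g f n).natDegree + 1 :=
        lt_of_le_of_lt (le_trans (Polynomial.natDegree_sub_le _ _) (le_refl _)) (by omega)
      rw [qPair_eq_sum q _ _ hN3]
      have hT := qPair_eq_sum q (g * f ^ k) (T n) hN
      have hS := qPair_eq_sum q (g * f ^ k) (qS q g f n) hN2
      have : ∑ i ∈ Finset.range (max (T n).natDegree (qS q g f n).natDegree + 1),
          p.coeff i * (PowerSeries.coeff (R := ℂ) i (g * f ^ k) * qFact q i)
          = qPair q (g * f ^ k) (T n) - qPair q (g * f ^ k) (qS q g f n) := by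
        rw [hT, hS, ← Finset.sum_sub_distrib]
        apply Finset.sum_congr rfl
        intro i _
        rw [hp, Polynomial.coeff_sub]
        ring
      rw [this, hTpair, qS_pair q hq hg hf0 hf1, sub_self]
    have := hpair0 m
    rw [qPair_eq_sum q _ _ (Nat.lt_succ_self m), Finset.sum_range_succ] at this
    have hzero : ∑ i ∈ Finset.range m, p.coeff i * (PowerSeries.coeff (R := ℂ) i (g * f ^ m) * qFact q i) = 0 := by
      apply Finset.sum_eq_zero
      intro i hi
      rw [Finset.mem_range] at hi
      have := qA_lt q hf0 g (hi : i < m)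
      rw [qA] at this
      rcases mul_eq_zero.mp this with h | h
      · rw [h]; ring
      · exact absurd h (hq i)
    rw [hzero, zero_add] at this
    have hlead : p.coeff m ≠ 0 := Polynomial.leadingCoeff_ne_zero.mpr hpne
    have : qA q g f m m = 0 := by
      rw [qA]
      rcases mul_eq_zero.mp (by
        have := mul_eq_zero.mp this
        rcases this with h | h
        · exact absurd h hlead
        · exact h) with h | h
      · rw [h]; ring
      · exact absurd h (hq m)
    exact hd m this
end

section
/- A sequence {A_{n,q}(x)} is q-Appell for g(t) if and only if A_{n,q}(x) = g(t)^{-1} x^n, where g(t)^{-1} acts as a linear operator on polynomials via f(t) x^n = ∑_{k=0}^n [n choose k]_q a_k x^{n-k} for f(t) = ∑_k (a_k/[k]_q!) t^k. -/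
open Finset

/-- A power series f(t) = ∑ (a_k/[k]_q!) t^k acting as a linear operator on
polynomials: f(t) x^n = ∑_{k=0}^n [n choose k]_q a_k x^{n-k}, extended linearly. -/
noncomputable def qOp (q : ℂ) (f : PowerSeries ℂ) (p : Polynomial ℂ) : Polynomial ℂ :=
  p.sum fun n c => Polynomial.C c *
    ∑ k ∈ Finset.range (n + 1),
      Polynomial.C (qBinom q n k * (PowerSeries.coeff (R := ℂ) k f * qFact q k)) *
        Polynomial.X ^ (n - k)

section Aux
variable (q : ℂ) (f : PowerSeries ℂ)

lemma qPair_eq (p : Polynomial ℂ) (N : ℕ) (hN : p.natDegree < N) :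
    qPair q f p = ∑ m ∈ range N, p.coeff m * (PowerSeries.coeff (R := ℂ) m f * qFact q m) :=
  Polynomial.sum_over_range' p (fun n => by simp) N hN

lemma qPair_sub (p r : Polynomial ℂ) :
    qPair q f (p - r) = qPair q f p - qPair q f r := by
  have h1 : p.natDegree < max p.natDegree r.natDegree + 1 := by omega
  have h2 : r.natDegree < max p.natDegree r.natDegree + 1 := by omega
  have h3 : (p - r).natDegree < max p.natDegree r.natDegree + 1 :=
    lt_of_le_of_lt (Polynomial.natDegree_sub_le p r) (by omega)
  rw [qPair_eq q f p _ h1, qPair_eq q f r _ h2, qPair_eq q f _ _ h3, ← Finset.sum_sub_distrib]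
  exact Finset.sum_congr rfl fun m _ => by rw [Polynomial.coeff_sub]; ring

lemma qPair_add (p r : Polynomial ℂ) :
    qPair q f (p + r) = qPair q f p + qPair q f r := by
  have h1 : p.natDegree < max p.natDegree r.natDegree + 1 := by omega
  have h2 : r.natDegree < max p.natDegree r.natDegree + 1 := by omega
  have h3 : (p + r).natDegree < max p.natDegree r.natDegree + 1 :=
    lt_of_le_of_lt (Polynomial.natDegree_add_le p r) (by omega)
  rw [qPair_eq q f p _ h1, qPair_eq q f r _ h2, qPair_eq q f _ _ h3, ← Finset.sum_add_distrib]
  exact Finset.sum_congr rfl fun m _ => by rw [Polynomial.coeff_add]; ring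

lemma qPair_finset_sum {ι : Type*} (s : Finset ι) (P : ι → Polynomial ℂ) :
    qPair q f (∑ i ∈ s, P i) = ∑ i ∈ s, qPair q f (P i) := by
  classical
  induction s using Finset.cons_induction with
  | empty => simp [qPair]
  | cons a s ha ih => rw [Finset.sum_cons, Finset.sum_cons, qPair_add, ih]

lemma qPair_monomial (a : ℂ) (m : ℕ) :
    qPair q f (Polynomial.C a * Polynomial.X ^ m) = a * (PowerSeries.coeff (R := ℂ) m f * qFact q m) := by
  rw [qPair, Polynomial.C_mul_X_pow_eq_monomial, Polynomial.sum_monomial_index]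
  simp

lemma qOp_X_pow (n : ℕ) : qOp q f (Polynomial.X ^ n) =
    ∑ k ∈ range (n + 1),
      Polynomial.C (qBinom q n k * (PowerSeries.coeff (R := ℂ) k f * qFact q k)) *
        Polynomial.X ^ (n - k) := by
  rw [qOp, Polynomial.X_pow_eq_monomial]
  rw [Polynomial.sum_monomial_index (1 : ℂ) _ (by simp)]
  simp

lemma qBinom_mul (hq : ∀ n, qFact q n ≠ 0) {n j : ℕ} (h : j ≤ n) :
    qBinom q n j * qFact q j * qFact q (n - j) = qFact q n := by
  rw [qBinom, mul_assoc, div_mul_eq_mul_div, mul_div_assoc,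
    div_self (mul_ne_zero (hq j) (hq (n - j))), mul_one]

end Aux

section Main
variable (q : ℂ)

lemma pair_B (hq : ∀ n, qFact q n ≠ 0) (g : PowerSeries ℂ)
    (hg : PowerSeries.coeff (R := ℂ) 0 g ≠ 0) (n k : ℕ) :
    qPair q (g * PowerSeries.X ^ k) (qOp q g⁻¹ (Polynomial.X ^ n)) =
      if n = k then qFact q n else 0 := by
  have hg' : PowerSeries.constantCoeff (R := ℂ) g ≠ 0 := by
    rwa [← PowerSeries.coeff_zero_eq_constantCoeff]
  rw [qOp_X_pow, qPair_finset_sum]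
  simp only [qPair_monomial]
  by_cases hk : k ≤ n
  · have hsub : range (n - k + 1) ⊆ range (n + 1) := by
      intro x hx; simp only [mem_range] at hx ⊢; omega
    rw [← Finset.sum_subset hsub (by
      intro j hj hj2
      simp only [mem_range] at hj hj2
      rw [PowerSeries.coeff_mul_X_pow', if_neg (by omega)]
      ring)]
    have hterm : ∀ j ∈ range (n - k + 1),
        qBinom q n j * (PowerSeries.coeff (R := ℂ) j g⁻¹ * qFact q j) *
          (PowerSeries.coeff (R := ℂ) (n - j) (g * PowerSeries.X ^ k) * qFact q (n - j)) =
        qFact q n * (PowerSeries.coeff (R := ℂ) j g⁻¹ * PowerSeries.coeff (R := ℂ) (n - k - j) g) := by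
      intro j hj
      simp only [mem_range] at hj
      rw [PowerSeries.coeff_mul_X_pow', if_pos (by omega), show n - j - k = n - k - j by omega,
        ← qBinom_mul q hq (show j ≤ n by omega)]
      ring
    rw [Finset.sum_congr rfl hterm, ← Finset.mul_sum,
      ← Finset.Nat.sum_antidiagonal_eq_sum_range_succ
        (fun a b => PowerSeries.coeff (R := ℂ) a g⁻¹ * PowerSeries.coeff (R := ℂ) b g) (n - k),
      ← PowerSeries.coeff_mul, PowerSeries.inv_mul_cancel g hg', PowerSeries.coeff_one]
    split_ifs with h1 h2 h3
    · ring
    · omega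
    · omega
    · ring
  · rw [Finset.sum_eq_zero, if_neg (by omega)]
    intro j hj
    simp only [mem_range] at hj
    rw [PowerSeries.coeff_mul_X_pow', if_neg (by omega)]
    ring

lemma eq_zero_of_pair (g : PowerSeries ℂ) (hq : ∀ n, qFact q n ≠ 0)
    (hg : PowerSeries.coeff (R := ℂ) 0 g ≠ 0) (p : Polynomial ℂ)
    (h : ∀ k, qPair q (g * PowerSeries.X ^ k) p = 0) : p = 0 := by
  by_contra hp
  set d := p.natDegree with hd
  have hd0 := h d
  rw [qPair_eq q _ p (d + 1) (lt_add_one _), Finset.sum_range_succ] at hd0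
  rw [Finset.sum_eq_zero (fun m hm => by
      simp only [mem_range] at hm
      rw [PowerSeries.coeff_mul_X_pow', if_neg (by omega)]
      ring), zero_add, PowerSeries.coeff_mul_X_pow', if_pos le_rfl, Nat.sub_self] at hd0
  exact mul_ne_zero (Polynomial.leadingCoeff_ne_zero.mpr hp)
    (mul_ne_zero hg (hq d)) hd0

end Main

/-- A sequence is q-Appell for g(t) iff A_n(x) = g(t)⁻¹ x^n as operators. -/
theorem qAppell_iff_qOp_inv (q : ℂ) (hq : ∀ n, qFact q n ≠ 0)
    (g : PowerSeries ℂ) (hg : PowerSeries.coeff (R := ℂ) 0 g ≠ 0)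
    (A : ℕ → Polynomial ℂ) :
    (∀ n k, qPair q (g * PowerSeries.X ^ k) (A n) =
        if n = k then qFact q n else 0) ↔
      ∀ n, A n = qOp q g⁻¹ (Polynomial.X ^ n) := by
  constructor
  · intro h n
    have hz : A n - qOp q g⁻¹ (Polynomial.X ^ n) = 0 := by
      apply eq_zero_of_pair q g hq hg
      intro k
      rw [qPair_sub, h n k, pair_B q hq g hg n k, sub_self]
    exact sub_eq_zero.mp hz
  · intro h n k
    rw [h n]
    exact pair_B q hq g hg n k
end
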